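/- Let k be a field and S = k[x,y] a polynomial ring in 2 variables with maximal homogeneous ideal m = (x,y). For integers s ≥ 1 and n ≥ 0, the length of S/(m^{[s]} m^n) as an S-module is: s^2 + n^2 + n if 1 ≤ n ≤ s, and binom(n+s+1, 2) if n ≥ s. -/

import Mathlib

open MvPolynomial Finset Pointwise
namespace Stmt0Aux

noncomputable def E2 (a b : ℕ) : Fin 2 →₀ ℕ := Finsupp.single 0 a + Finsupp.single 1 b
@[simp] lemma E2_apply0 (a b : ℕ) : E2 a b 0 = a := by simp [E2, Finsupp.single_apply]
@[simp] lemma E2_apply1 (a b : ℕ) : E2 a b 1 = b := by simp [E2, Finsupp.single_apply]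
lemma eq_E2 (e : Fin 2 →₀ ℕ) : e = E2 (e 0) (e 1) := by ext i; fin_cases i <;> simp
lemma E2_add (a b c d : ℕ) : E2 a b + E2 c d = E2 (a + c) (b + d) := by
  ext i; fin_cases i <;> simp
lemma le_iff' (e f : Fin 2 →₀ ℕ) : e ≤ f ↔ e 0 ≤ f 0 ∧ e 1 ≤ f 1 := by
  rw [Finsupp.le_def]
  exact ⟨fun h => ⟨h 0, h 1⟩, fun ⟨h0, h1⟩ i => by fin_cases i <;> assumption⟩
lemma eq_iff' (e f : Fin 2 →₀ ℕ) : e = f ↔ e 0 = f 0 ∧ e 1 = f 1 := by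
  constructor
  · rintro rfl; exact ⟨rfl, rfl⟩
  · rintro ⟨h0, h1⟩; ext i; fin_cases i <;> assumption

variable (k : Type*) [Field k]

/-- span of monomials with exponents in `A` -/
noncomputable def msp (A : Set (Fin 2 →₀ ℕ)) : Ideal (MvPolynomial (Fin 2) k) :=
  Ideal.span ((fun e => monomial e (1 : k)) '' A)

lemma image_mul (A B : Set (Fin 2 →₀ ℕ)) :
    ((fun e => monomial e (1 : k)) '' A) * ((fun e => monomial e (1 : k)) '' B)
      = (fun e => monomial e (1 : k)) '' (A + B) := by
  ext x
  simp only [Set.mem_mul, Set.mem_image, Set.mem_add]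
  constructor
  · rintro ⟨-, ⟨a, ha, rfl⟩, -, ⟨b, hb, rfl⟩, rfl⟩
    exact ⟨a + b, ⟨a, ha, b, hb, rfl⟩, by simp [monomial_mul]⟩
  · rintro ⟨-, ⟨a, ha, b, hb, rfl⟩, rfl⟩
    exact ⟨_, ⟨a, ha, rfl⟩, _, ⟨b, hb, rfl⟩, by simp [monomial_mul]⟩

lemma msp_mul (A B : Set (Fin 2 →₀ ℕ)) : msp k A * msp k B = msp k (A + B) := by
  rw [msp, msp, Ideal.span_mul_span', image_mul, msp]

lemma deg_set_mul (j : ℕ) :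
    ({e | e 0 + e 1 = j} + {e | e 0 + e 1 = 1} : Set (Fin 2 →₀ ℕ))
      = {e | e 0 + e 1 = j + 1} := by
  ext e
  simp only [Set.mem_add, Set.mem_setOf_eq]
  constructor
  · rintro ⟨a, ha, b, hb, rfl⟩; simp only [Finsupp.add_apply]; omega
  · intro he
    rcases Nat.eq_zero_or_pos (e 0) with h0 | h0
    · refine ⟨E2 (e 0) (e 1 - 1), by simp; omega, E2 0 1, by simp, ?_⟩
      rw [E2_add, eq_iff']; simp; omega
    · refine ⟨E2 (e 0 - 1) (e 1), by simp; omega, E2 1 0, by simp, ?_⟩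
      rw [E2_add, eq_iff']; simp; omega

lemma single_zero_eq (c : ℕ) : E2 c 0 = Finsupp.single 0 c := by simp [E2]
lemma single_one_eq (c : ℕ) : E2 0 c = Finsupp.single 1 c := by simp [E2]

lemma m_eq : Ideal.span {X 0, X 1} = msp k {e | e 0 + e 1 = 1} := by
  have hset : ({e | e 0 + e 1 = 1} : Set (Fin 2 →₀ ℕ)) = {E2 1 0, E2 0 1} := by
    ext e
    simp only [Set.mem_setOf_eq, Set.mem_insert_iff, Set.mem_singleton_iff,
      eq_iff']
    simp
    omega
  rw [msp, hset, Set.image_insert_eq, Set.image_singleton, single_zero_eq, single_one_eq,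
    ← X_pow_eq_monomial, ← X_pow_eq_monomial, pow_one, pow_one]

lemma m_pow_eq (j : ℕ) : (Ideal.span {X 0, X 1}) ^ j = msp k {e | e 0 + e 1 = j} := by
  induction j with
  | zero =>
    rw [pow_zero, Ideal.one_eq_top, msp]
    have : ({e | e 0 + e 1 = 0} : Set (Fin 2 →₀ ℕ)) = {0} := by
      ext e
      simp only [Set.mem_setOf_eq, Set.mem_singleton_iff]
      constructor
      · intro h; ext i; fin_cases i <;> simp <;> omega
      · rintro rfl; simp
    rw [this, Set.image_singleton, monomial_zero', C_1, Ideal.span_singleton_one]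
  | succ j ih =>
    rw [pow_succ, ih, m_eq, msp_mul, deg_set_mul]

/-- the generating exponent set of `frob * m ^ n` -/
def G (s n : ℕ) : Set (Fin 2 →₀ ℕ) := {e | e 0 + e 1 = n + s ∧ (s ≤ e 0 ∨ s ≤ e 1)}

lemma frob_eq (s : ℕ) :
    Ideal.span {X 0 ^ s, X 1 ^ s} = msp k ({E2 s 0, E2 0 s} : Set (Fin 2 →₀ ℕ)) := by
  rw [msp, Set.image_insert_eq, Set.image_singleton, single_zero_eq, single_one_eq,
    ← X_pow_eq_monomial, ← X_pow_eq_monomial]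

lemma frob_mul_m_pow (s n : ℕ) :
    Ideal.span {X 0 ^ s, X 1 ^ s} * (Ideal.span {X 0, X 1} : Ideal (MvPolynomial (Fin 2) k)) ^ n
      = msp k (G s n) := by
  rw [frob_eq, m_pow_eq, msp_mul]
  congr 1
  ext e
  simp only [Set.mem_add, Set.mem_insert_iff, Set.mem_singleton_iff, Set.mem_setOf_eq, G]
  constructor
  · rintro ⟨a, (rfl | rfl), b, hb, rfl⟩ <;> simp only [Finsupp.add_apply] <;> simp <;> omega
  · rintro ⟨hdeg, hor | hor⟩
    · refine ⟨E2 s 0, Or.inl rfl, E2 (e 0 - s) (e 1), by simp; omega, ?_⟩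
      rw [E2_add, eq_iff']; simp; omega
    · refine ⟨E2 0 s, Or.inr rfl, E2 (e 0) (e 1 - s), by simp; omega, ?_⟩
      rw [E2_add, eq_iff']; simp; omega


/-- exponents of monomials lying in the ideal -/
def Mset (s n : ℕ) : Set (Fin 2 →₀ ℕ) := {e | n + s ≤ e 0 + e 1 ∧ (s ≤ e 0 ∨ s ≤ e 1)}

lemma exists_G_le_iff (s n : ℕ) (e : Fin 2 →₀ ℕ) :
    (∃ g ∈ G s n, g ≤ e) ↔ e ∈ Mset s n := by
  constructor
  · rintro ⟨g, ⟨hdeg, hor⟩, hle⟩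
    rw [le_iff'] at hle
    constructor
    · omega
    · omega
  · rintro ⟨hdeg, hor | hor⟩
    · refine ⟨E2 (n + s - min (e 1) n) (min (e 1) n),
        ⟨by simp only [G, Set.mem_setOf_eq, E2_apply0, E2_apply1]; omega, ?_⟩⟩
      rw [le_iff']; simp only [E2_apply0, E2_apply1]; omega
    · refine ⟨E2 (min (e 0) n) (n + s - min (e 0) n),
        ⟨by simp only [G, Set.mem_setOf_eq, E2_apply0, E2_apply1]; omega, ?_⟩⟩
      rw [le_iff']; simp only [E2_apply0, E2_apply1]; omega

lemma mem_msp_G (s n : ℕ) (p : MvPolynomial (Fin 2) k) :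
    p ∈ msp k (G s n) ↔ ∀ e ∈ p.support, e ∈ Mset s n := by
  rw [msp, mem_ideal_span_monomial_image]
  exact forall₂_congr fun e _ => exists_G_le_iff s n e

lemma monomial_mem_msp_G (s n : ℕ) (e : Fin 2 →₀ ℕ) :
    monomial e (1 : k) ∈ msp k (G s n) ↔ e ∈ Mset s n := by
  classical
  rw [mem_msp_G, support_monomial, if_neg one_ne_zero]
  simp

/-- the standard monomials (exponents not in the ideal) -/
noncomputable def Bfin (s n : ℕ) : Finset (Fin 2 →₀ ℕ) :=
  ((Finset.range (n + s + s) ×ˢ Finset.range (n + s + s)).image fun p => E2 p.1 p.2).filter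
    (fun e => ¬(n + s ≤ e 0 + e 1 ∧ (s ≤ e 0 ∨ s ≤ e 1)))

lemma mem_Bfin (s n : ℕ) (hs : 1 ≤ s) (e : Fin 2 →₀ ℕ) :
    e ∈ Bfin s n ↔ e ∉ Mset s n := by
  rw [Bfin, Finset.mem_filter]
  constructor
  · rintro ⟨-, h⟩; exact h
  · intro h
    have h' : ¬(n + s ≤ e 0 + e 1 ∧ (s ≤ e 0 ∨ s ≤ e 1)) := h
    refine ⟨Finset.mem_image.2 ⟨(e 0, e 1), Finset.mem_product.2 ⟨?_, ?_⟩, (eq_E2 e).symm⟩, h'⟩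
    · rw [Finset.mem_range]; omega
    · rw [Finset.mem_range]; omega

section Quotient

variable (s n : ℕ)

local notation "S" => MvPolynomial (Fin 2) k
local notation "I" => msp k (G s n)

noncomputable def φ : S →ₐ[k] S ⧸ I := Ideal.Quotient.mkₐ k _

lemma φ_monomial_eq_zero (e : Fin 2 →₀ ℕ) (he : e ∈ Mset s n) :
    φ k s n (monomial e (1 : k)) = 0 := by
  rw [φ, Ideal.Quotient.mkₐ_eq_mk, Ideal.Quotient.eq_zero_iff_mem]
  exact (monomial_mem_msp_G k s n e).2 he

noncomputable def qb : Bfin s n → (S ⧸ I) := fun p => φ k s n (monomial p.1 (1 : k))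

lemma qb_li (hs : 1 ≤ s) : LinearIndependent k (qb k s n) := by
  rw [Fintype.linearIndependent_iff]
  intro g hg j
  by_contra hj
  have h1 : ∀ i : Bfin s n, g i • qb k s n i = φ k s n (monomial i.1 (g i)) := fun i => by
    rw [qb, ← map_smul, smul_monomial, smul_eq_mul, mul_one]
  have hφ : φ k s n (∑ i : Bfin s n, monomial i.1 (g i)) = 0 := by
    rw [map_sum, ← hg]
    exact Finset.sum_congr rfl fun i _ => (h1 i).symm
  have hmem : (∑ i : Bfin s n, monomial i.1 (g i)) ∈ I := by
    rw [← Ideal.Quotient.eq_zero_iff_mem]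
    rwa [φ, Ideal.Quotient.mkₐ_eq_mk] at hφ
  have hcoeff : coeff j.1 (∑ i : Bfin s n, monomial i.1 (g i)) = g j := by
    rw [coeff_sum]
    rw [Finset.sum_eq_single j]
    · rw [coeff_monomial, if_pos rfl]
    · intro i _ hij
      rw [coeff_monomial, if_neg]
      exact fun h => hij (Subtype.ext h)
    · intro h; exact absurd (Finset.mem_univ j) h
  have hsupp : j.1 ∈ (∑ i : Bfin s n, monomial i.1 (g i)).support := by
    rw [mem_support_iff, hcoeff]; exact hj
  have := (mem_msp_G k s n _).1 hmem j.1 hsupp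
  exact ((mem_Bfin s n hs j.1).1 j.2) this

lemma qb_span (hs : 1 ≤ s) : ⊤ ≤ Submodule.span k (Set.range (qb k s n)) := by
  rintro q -
  obtain ⟨p, rfl⟩ := Ideal.Quotient.mkₐ_surjective k _ q
  have hp : p ∈ Submodule.span k (Set.range fun e => monomial e (1 : k)) := by
    rw [← coe_basisMonomials, Module.Basis.span_eq]; trivial
  induction hp using Submodule.span_induction with
  | mem x hx =>
    obtain ⟨e, rfl⟩ := hx
    by_cases he : e ∈ Mset s n
    · rw [show (Ideal.Quotient.mkₐ k _) (monomial e (1:k)) = φ k s n (monomial e (1:k)) from rfl,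
        φ_monomial_eq_zero k s n e he]
      exact Submodule.zero_mem _
    · exact Submodule.subset_span ⟨⟨e, (mem_Bfin s n hs e).2 he⟩, rfl⟩
  | zero => rw [map_zero]; exact Submodule.zero_mem _
  | add x y _ _ hx hy => rw [map_add]; exact Submodule.add_mem _ hx hy
  | smul c x _ hx => rw [map_smul]; exact Submodule.smul_mem _ c hx

noncomputable def qbasis (hs : 1 ≤ s) : Module.Basis (Bfin s n) k (S ⧸ I) :=
  Module.Basis.mk (qb_li k s n hs) (qb_span k s n hs)

lemma finrank_Q (hs : 1 ≤ s) : Module.finrank k (S ⧸ I) = (Bfin s n).card := by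
  rw [Module.finrank_eq_card_basis (qbasis k s n hs), Fintype.card_coe]

end Quotient

/-! ### Upper bound for Krull dimension of the submodule lattice -/

lemma length_le_of_strictMono_nat {α : Type*} [Preorder α] (p : LTSeries α) (g : α → ℕ)
    (hg : StrictMono g) (d : ℕ) (hb : ∀ a, g a ≤ d) : p.length ≤ d := by
  have h : ∀ i : Fin (p.length + 1), (i : ℕ) ≤ g (p.toFun i) := by
    intro i
    induction i using Fin.induction with
    | zero => exact Nat.zero_le _
    | succ i ih =>
      have h2 := hg (p.step i)
      rw [Fin.coe_castSucc] at ih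
      rw [Fin.val_succ]
      omega
  have := h (Fin.last _)
  rw [Fin.val_last] at this
  exact le_trans this (hb _)

lemma krullDim_submodule_le {K R M : Type*} [DivisionRing K] [Ring R] [AddCommGroup M]
    [Module R M] [Module K M] [SMul K R] [IsScalarTower K R M] [FiniteDimensional K M] :
    Order.krullDim (Submodule R M) ≤ ((Module.finrank K M : ℕ∞) : WithBot ℕ∞) := by
  rw [Order.krullDim_eq_iSup_length, WithBot.coe_le_coe]
  apply iSup_le
  intro p
  rw [Nat.cast_le]
  refine length_le_of_strictMono_nat p
    (fun N => Module.finrank K (N.restrictScalars K)) ?_ _ ?_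
  · intro N N' h
    exact Submodule.finrank_lt_finrank_of_lt ((Submodule.restrictScalarsEmbedding K R M).strictMono h)
  · intro N
    exact Submodule.finrank_le _

/-! ### The chain of monomial ideals -/

/-- ranking function: graded (reverse) order on exponents -/
def κ (s n : ℕ) (e : Fin 2 →₀ ℕ) : ℕ := (n + s + s - (e 0 + e 1)) * (n + s + s + 1) + e 0

lemma notMset_bounds (s n : ℕ) (hs : 1 ≤ s) {e : Fin 2 →₀ ℕ} (he : e ∉ Mset s n) :
    e 0 + e 1 < n + s + s := by
  have h : ¬(n + s ≤ e 0 + e 1 ∧ (s ≤ e 0 ∨ s ≤ e 1)) := he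
  omega

lemma κ_injOn (s n : ℕ) (hs : 1 ≤ s) {e f : Fin 2 →₀ ℕ} (he : e ∉ Mset s n)
    (hf : f ∉ Mset s n) (h : κ s n e = κ s n f) : e = f := by
  have hbe := notMset_bounds s n hs he
  have hbf := notMset_bounds s n hs hf
  have h0 : e 0 = f 0 := by
    have m1 : κ s n e % (n + s + s + 1) = e 0 := by
      rw [κ, Nat.add_comm, Nat.add_mul_mod_self_right, Nat.mod_eq_of_lt (by omega)]
    have m2 : κ s n f % (n + s + s + 1) = f 0 := by
      rw [κ, Nat.add_comm, Nat.add_mul_mod_self_right, Nat.mod_eq_of_lt (by omega)]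
    rw [← m1, ← m2, h]
  have hmul : (n + s + s - (e 0 + e 1)) * (n + s + s + 1)
      = (n + s + s - (f 0 + f 1)) * (n + s + s + 1) := by
    rw [κ, κ] at h
    omega
  have hdeg : n + s + s - (e 0 + e 1) = n + s + s - (f 0 + f 1) :=
    Nat.eq_of_mul_eq_mul_right (by omega) hmul
  rw [eq_iff']
  omega

lemma κ_anti (s n : ℕ) (hs : 1 ≤ s) {e f : Fin 2 →₀ ℕ} (he : e ∉ Mset s n)
    (hf : f ∉ Mset s n) (hle : e ≤ f) (hne : e ≠ f) : κ s n f < κ s n e := by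
  have hbe := notMset_bounds s n hs he
  have hbf := notMset_bounds s n hs hf
  rw [le_iff'] at hle
  rw [Ne, eq_iff'] at hne
  have hdeg : e 0 + e 1 < f 0 + f 1 := by omega
  have hab : (n + s + s - (f 0 + f 1)) + 1 ≤ n + s + s - (e 0 + e 1) := by omega
  calc κ s n f = (n + s + s - (f 0 + f 1)) * (n + s + s + 1) + f 0 := rfl
    _ < (n + s + s - (f 0 + f 1)) * (n + s + s + 1) + (n + s + s + 1) := by omega
    _ = ((n + s + s - (f 0 + f 1)) + 1) * (n + s + s + 1) := by ring
    _ ≤ (n + s + s - (e 0 + e 1)) * (n + s + s + 1) := Nat.mul_le_mul_right _ hab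
    _ ≤ (n + s + s - (e 0 + e 1)) * (n + s + s + 1) + e 0 := Nat.le_add_right _ _
    _ = κ s n e := rfl

lemma Mset_upclosed (s n : ℕ) {u e : Fin 2 →₀ ℕ} (hu : u ∈ Mset s n) (hle : u ≤ e) :
    e ∈ Mset s n := by
  rw [le_iff'] at hle
  obtain ⟨h1, h2⟩ := hu
  exact ⟨by omega, by omega⟩

section Chain

variable (s n : ℕ) (hs : 1 ≤ s)

/-- the values of κ on the standard monomials -/
noncomputable def Tv : Finset ℕ := (Bfin s n).image (κ s n)

lemma Tv_card (hs : 1 ≤ s) : (Tv s n).card = (Bfin s n).card :=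
  Finset.card_image_of_injOn fun e he f hf h =>
    κ_injOn s n hs ((mem_Bfin s n hs e).1 he) ((mem_Bfin s n hs f).1 hf) h

/-- the order isomorphism enumerating the κ-values -/
noncomputable def vv (hs : 1 ≤ s) : Fin (Bfin s n).card ≃o (Tv s n : Finset ℕ) :=
  (Tv s n).orderIsoOfFin (Tv_card s n hs)

/-- the increasing chain of exponent sets -/
def U (hs : 1 ≤ s) (j : Fin ((Bfin s n).card + 1)) : Set (Fin 2 →₀ ℕ) :=
  Mset s n ∪ {e | e ∈ Bfin s n ∧ ∃ i : Fin (Bfin s n).card,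
    (i : ℕ) < (j : ℕ) ∧ κ s n e = (vv s n hs i : ℕ)}

lemma U_mono {j j' : Fin ((Bfin s n).card + 1)} (h : (j : ℕ) ≤ (j' : ℕ)) :
    U s n hs j ⊆ U s n hs j' := by
  rintro e (he | ⟨heB, i, hi, hκ⟩)
  · exact Or.inl he
  · exact Or.inr ⟨heB, i, by omega, hκ⟩

lemma U_zero : U s n hs 0 = Mset s n := by
  rw [U]
  refine Set.union_eq_self_of_subset_right ?_
  rintro e ⟨-, i, hi, -⟩
  simp at hi

lemma monomial_mem_msp (A : Set (Fin 2 →₀ ℕ)) (e : Fin 2 →₀ ℕ) :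
    monomial e (1 : k) ∈ msp k A ↔ ∃ u ∈ A, u ≤ e := by
  classical
  rw [msp, mem_ideal_span_monomial_image, support_monomial, if_neg one_ne_zero]
  simp

lemma J_zero : msp k (U s n hs 0) = msp k (G s n) := by
  rw [U_zero]
  apply le_antisymm
  · rw [msp, Ideal.span_le]
    rintro x ⟨e, he, rfl⟩
    exact (monomial_mem_msp_G k s n e).2 he
  · rw [msp, Ideal.span_le]
    rintro x ⟨e, he, rfl⟩
    refine (monomial_mem_msp k _ e).2 ⟨e, ?_, le_refl e⟩
    obtain ⟨h1, h2⟩ := he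
    exact ⟨by omega, h2⟩

lemma J_top : msp k (U s n hs (Fin.last _)) = ⊤ := by
  rw [Ideal.eq_top_iff_one]
  have h1 : (1 : MvPolynomial (Fin 2) k) = monomial 0 1 := by
    rw [monomial_zero', C_1]
  have h0 : (0 : Fin 2 →₀ ℕ) ∉ Mset s n := by
    rintro ⟨hd, -⟩
    simp at hd
    omega
  have h0B : (0 : Fin 2 →₀ ℕ) ∈ Bfin s n := (mem_Bfin s n hs 0).2 h0
  have hκT : κ s n 0 ∈ Tv s n := Finset.mem_image_of_mem _ h0B
  obtain ⟨i, hi⟩ := (vv s n hs).surjective ⟨κ s n 0, hκT⟩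
  rw [h1, monomial_mem_msp]
  refine ⟨0, Or.inr ⟨h0B, i, ?_, ?_⟩, le_refl _⟩
  · rw [Fin.val_last]; exact i.isLt
  · rw [hi]

lemma J_strict (j : Fin (Bfin s n).card) :
    msp k (U s n hs j.castSucc) < msp k (U s n hs j.succ) := by
  have hle : msp k (U s n hs j.castSucc) ≤ msp k (U s n hs j.succ) := by
    rw [msp, msp]
    exact Ideal.span_mono (Set.image_mono (U_mono s n hs (by
      rw [Fin.coe_castSucc, Fin.val_succ]; omega)))
  refine lt_of_le_of_ne hle ?_
  obtain ⟨e, heB, hκ⟩ := Finset.mem_image.1 (vv s n hs j).2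
  have heMem : monomial e (1 : k) ∈ msp k (U s n hs j.succ) := by
    rw [monomial_mem_msp]
    exact ⟨e, Or.inr ⟨heB, j, by rw [Fin.val_succ]; omega, hκ⟩, le_refl _⟩
  have heNot : monomial e (1 : k) ∉ msp k (U s n hs j.castSucc) := by
    rw [monomial_mem_msp]
    rintro ⟨u, hu | ⟨huB, i, hi, hκu⟩, hle'⟩
    · exact ((mem_Bfin s n hs e).1 heB) (Mset_upclosed s n hu hle')
    · by_cases hue : u = e
      · subst hue
        have : vv s n hs i = vv s n hs j := by
          apply Subtype.ext
          rw [← hκu, hκ]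
        have hij := (vv s n hs).injective this
        rw [hij, Fin.coe_castSucc] at hi
        omega
      · have h1 : κ s n e < κ s n u :=
          κ_anti s n hs ((mem_Bfin s n hs u).1 huB) ((mem_Bfin s n hs e).1 heB) hle' hue
        have h2 : (vv s n hs i : ℕ) < (vv s n hs j : ℕ) := by
          rw [Subtype.coe_lt_coe]
          refine (vv s n hs).strictMono ?_
          rw [Fin.lt_def]
          rw [Fin.coe_castSucc] at hi
          exact hi
        rw [hκu] at h1
        rw [← hκ] at h2
        omega
  intro hEq
  rw [hEq] at heNot
  exact heNot heMem

end Chain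

/-! ### Counting the standard monomials -/

def fB (s n a : ℕ) : ℕ := max ((n + s) - a) (if a < s then s else 0)

lemma sum_sub (N : ℕ) : ∑ a ∈ Finset.range N, (N - a) = (N + 1).choose 2 := by
  induction N with
  | zero => simp
  | succ N ih =>
    rw [Finset.sum_range_succ]
    have h1 : ∑ a ∈ Finset.range N, (N + 1 - a) = (∑ a ∈ Finset.range N, (N - a)) + N := by
      rw [show (∑ a ∈ Finset.range N, (N + 1 - a)) = ∑ a ∈ Finset.range N, ((N - a) + 1) from
        Finset.sum_congr rfl fun a ha => by rw [Finset.mem_range] at ha; omega]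
      rw [Finset.sum_add_distrib, Finset.sum_const, Finset.card_range, smul_eq_mul, mul_one]
    rw [h1, ih]
    have h2 : (N + 1 + 1).choose 2 = (N + 1).choose 1 + (N + 1).choose 2 :=
      Nat.choose_succ_succ _ _
    rw [Nat.choose_one_right] at h2
    omega

lemma choose_two (n : ℕ) : (n + 1).choose 2 + (n + 1).choose 2 = n * n + n := by
  induction n with
  | zero => simp
  | succ n ih =>
    have h2 : (n + 1 + 1).choose 2 = (n + 1).choose 1 + (n + 1).choose 2 :=
      Nat.choose_succ_succ _ _
    rw [Nat.choose_one_right] at h2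
    have h3 : (n + 1) * (n + 1) = n * n + 2 * n + 1 := by ring
    omega

lemma filter_eq_range (s n : ℕ) (hs : 1 ≤ s) (a : ℕ) :
    (Finset.range (n + s + s)).filter
      (fun b => ¬(n + s ≤ a + b ∧ (s ≤ a ∨ s ≤ b))) = Finset.range (fB s n a) := by
  ext b
  rw [Finset.mem_filter, Finset.mem_range, Finset.mem_range, fB]
  split_ifs with h
  · simp only [Nat.max_def]
    split_ifs <;> omega
  · simp only [Nat.max_def]
    split_ifs <;> omega

lemma card_filter_product (s n : ℕ) (hs : 1 ≤ s) :
    ((Finset.range (n + s + s) ×ˢ Finset.range (n + s + s)).filter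
      (fun p => ¬(n + s ≤ p.1 + p.2 ∧ (s ≤ p.1 ∨ s ≤ p.2)))).card
      = ∑ a ∈ Finset.range (n + s), fB s n a := by
  rw [Finset.card_filter, Finset.sum_product]
  have inner : ∀ a, (∑ b ∈ Finset.range (n + s + s),
      if ¬(n + s ≤ a + b ∧ (s ≤ a ∨ s ≤ b)) then 1 else 0) = fB s n a := by
    intro a
    rw [← Finset.card_filter, filter_eq_range s n hs a, Finset.card_range]
  rw [Finset.sum_congr rfl fun a _ => inner a]
  symm
  apply Finset.sum_subset (Finset.range_subset_range.2 (by omega))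
  intro a _ ha
  rw [Finset.mem_range] at ha
  simp only [fB, Nat.max_def]
  split_ifs <;> omega

lemma card_Bfin (s n : ℕ) (hs : 1 ≤ s) :
    (Bfin s n).card = ∑ a ∈ Finset.range (n + s), fB s n a := by
  classical
  rw [← card_filter_product s n hs, Bfin, Finset.filter_image]
  rw [Finset.card_image_of_injOn]
  · congr 1
    apply Finset.filter_congr
    intro p _
    simp only [E2_apply0, E2_apply1]
  · intro p _ q _ h
    have h0 := congrArg (fun e => e 0) h
    have h1 := congrArg (fun e => e 1) h
    simp only [E2_apply0, E2_apply1] at h0 h1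
    exact Prod.ext h0 h1

lemma card_case2 (s n : ℕ) (hs : 1 ≤ s) (hn : s ≤ n) :
    (Bfin s n).card = (n + s + 1).choose 2 := by
  rw [card_Bfin s n hs]
  have h : ∀ a ∈ Finset.range (n + s), fB s n a = (n + s) - a := by
    intro a ha
    rw [Finset.mem_range] at ha
    simp only [fB, Nat.max_def]
    split_ifs <;> omega
  rw [Finset.sum_congr rfl h, sum_sub]

lemma card_case1 (s n : ℕ) (hs : 1 ≤ s) (hn : n ≤ s) :
    (Bfin s n).card = s * s + n * n + n := by
  rw [card_Bfin s n hs]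
  rw [Finset.range_eq_Ico, ← Finset.sum_Ico_consecutive _ (Nat.zero_le s)
    (show s ≤ n + s by omega), ← Finset.range_eq_Ico]
  have h2 : ∑ a ∈ Finset.Ico s (n + s), fB s n a = (n + 1).choose 2 := by
    rw [Finset.sum_Ico_eq_sum_range]
    rw [show n + s - s = n by omega]
    have h : ∀ i ∈ Finset.range n, fB s n (s + i) = n - i := by
      intro i hi
      rw [Finset.mem_range] at hi
      simp only [fB, Nat.max_def]
      split_ifs <;> omega
    rw [Finset.sum_congr rfl h, sum_sub]
  have h1 : ∑ a ∈ Finset.range s, fB s n a = s * s + (n + 1).choose 2 := by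
    have h : ∀ a ∈ Finset.range s, fB s n a = s + (n - a) := by
      intro a ha
      rw [Finset.mem_range] at ha
      simp only [fB, Nat.max_def]
      split_ifs <;> omega
    rw [Finset.sum_congr rfl h, Finset.sum_add_distrib, Finset.sum_const, Finset.card_range,
      smul_eq_mul]
    congr 1
    rw [show (∑ a ∈ Finset.range s, (n - a)) = ∑ a ∈ Finset.range n, (n - a) from
      (Finset.sum_subset (Finset.range_subset_range.2 hn) fun a _ ha => by
        rw [Finset.mem_range] at ha; omega).symm]
    rw [sum_sub]
  rw [h1, h2]
  have := choose_two n
  omega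

/-! ### Main krullDim computation -/

lemma krullDim_eq (k : Type*) [Field k] (s n : ℕ) (hs : 1 ≤ s) :
    Order.krullDim (Submodule (MvPolynomial (Fin 2) k)
        (MvPolynomial (Fin 2) k ⧸ msp k (G s n)))
      = (((Bfin s n).card : ℕ∞) : WithBot ℕ∞) := by
  haveI : FiniteDimensional k (MvPolynomial (Fin 2) k ⧸ msp k (G s n)) :=
    Module.Finite.of_basis (qbasis k s n hs)
  apply le_antisymm
  · have h := krullDim_submodule_le (K := k) (R := MvPolynomial (Fin 2) k)
      (M := MvPolynomial (Fin 2) k ⧸ msp k (G s n))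
    rwa [finrank_Q k s n hs] at h
  · have hle : ∀ j : Fin ((Bfin s n).card + 1), msp k (G s n) ≤ msp k (U s n hs j) := by
      intro j
      rw [← J_zero k s n hs]
      rw [msp, msp]
      exact Ideal.span_mono (Set.image_mono (U_mono s n hs (Nat.zero_le _)))
    let ch : LTSeries (Submodule (MvPolynomial (Fin 2) k)
        (MvPolynomial (Fin 2) k ⧸ msp k (G s n))) :=
      { length := (Bfin s n).card
        toFun := fun j => (Submodule.comapMkQRelIso (msp k (G s n))).symm
          ⟨msp k (U s n hs j), hle j⟩
        step := fun j => by
          apply (Submodule.comapMkQRelIso (msp k (G s n))).symm.strictMono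
          exact Subtype.mk_lt_mk.2 (J_strict k s n hs j) }
    have h := Order.LTSeries.length_le_krullDim ch
    have hlen : ch.length = (Bfin s n).card := rfl
    rw [hlen] at h
    exact_mod_cast h

end Stmt0Aux

/-- The length of a module `M` over a ring `R`, defined as the Krull dimension of
its lattice of submodules (i.e. the supremum of lengths of strictly increasing
chains of submodules). -/
noncomputable def moduleLength (R : Type*) [Ring R] (M : Type*) [AddCommGroup M]
    [Module R M] : WithBot ℕ∞ :=
  Order.krullDim (Submodule R M)

/-- Let `S = k[x,y]` with maximal homogeneous ideal `m = (x,y)`.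
For `s ≥ 1` and `n ≥ 0`, the length of `S/(m^{[s]} m^n)` is `s² + n² + n` when
`1 ≤ n ≤ s`, and `C(n+s+1, 2)` when `n ≥ s`. Here `m^{[s]} = (xˢ, yˢ)`. -/
theorem stmt0 (k : Type*) [Field k] (s n : ℕ) (hs : 1 ≤ s)
    (m frob : Ideal (MvPolynomial (Fin 2) k))
    (hm : m = Ideal.span {MvPolynomial.X 0, MvPolynomial.X 1})
    (hfrob : frob = Ideal.span {MvPolynomial.X 0 ^ s, MvPolynomial.X 1 ^ s}) :
    (1 ≤ n → n ≤ s →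
      moduleLength (MvPolynomial (Fin 2) k) (MvPolynomial (Fin 2) k ⧸ (frob * m ^ n)) =
        ((s ^ 2 + n ^ 2 + n : ℕ) : ℕ∞)) ∧
    (s ≤ n →
      moduleLength (MvPolynomial (Fin 2) k) (MvPolynomial (Fin 2) k ⧸ (frob * m ^ n)) =
        (((n + s + 1).choose 2 : ℕ) : ℕ∞)) := by
  subst hm hfrob
  rw [Stmt0Aux.frob_mul_m_pow]
  constructor
  · intro _ h2
    unfold moduleLength
    rw [Stmt0Aux.krullDim_eq k s n hs, Stmt0Aux.card_case1 s n hs h2]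
    have h3 : s * s + n * n + n = s ^ 2 + n ^ 2 + n := by ring
    rw [h3]
  · intro h
    unfold moduleLength
    rw [Stmt0Aux.krullDim_eq k s n hs, Stmt0Aux.card_case2 s n hs h]
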